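/- For all x ∈ (0,∞), ĥ̲(x) ≤ h(x), and equality holds at x = y. -/

import Mathlib

/-- Fix `y > 0` and `0 < β ≤ 1`. With `h x = -log x`, the quadratic surrogate
`ĥ x = -log y - (x-y)/y + (β/2)(x-y)²/y²` and the lower surrogate `ĥ̲` (equal to `ĥ` for
`x ≤ y/β` and its linear extension with slope `-β/y` beyond `y/β`), we have
`ĥ̲ x ≤ h x` for all `x ∈ (0,∞)`, with equality at `x = y`. -/
theorem stmt0 (y β : ℝ) (hy : 0 < y) (hβ0 : 0 < β) (hβ1 : β ≤ 1)
    (h hhat hlow : ℝ → ℝ)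
    (hdef : ∀ x, h x = -Real.log x)
    (hhatdef : ∀ x, hhat x = -Real.log y - (x - y) / y + (β / 2) * (x - y) ^ 2 / y ^ 2)
    (hlowdef : ∀ x, hlow x =
      if x ≤ y / β then hhat x else hhat (y / β) - (β / y) * (x - y / β)) :
    (∀ x, 0 < x → hlow x ≤ h x) ∧ hlow y = h y := by
  have hyne : y ≠ 0 := ne_of_gt hy
  set c : ℝ := y / β with hc
  have hcy : y ≤ c := by
    rw [hc, le_div_iff₀ hβ0]; nlinarith
  have hcpos : 0 < c := lt_of_lt_of_le hy hcy
  have hβc : β * c = y := by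
    rw [hc]; field_simp
  set F : ℝ → ℝ := fun x => -Real.log x + Real.log y + (x - y)/y - (β/2)*(x-y)^2/y^2
    with hF
  have hFy : F y = 0 := by simp [hF]
  have hFd : ∀ x : ℝ, 0 < x → HasDerivAt F ((x - y) * (y - β * x) / (x * y^2)) x := by
    intro x hx
    have h1 : HasDerivAt (fun t : ℝ => -Real.log t) (-x⁻¹) x :=
      (Real.hasDerivAt_log hx.ne').neg
    have h2 : HasDerivAt (fun t : ℝ => (t - y)/y) (1/y) x := by
      simpa using ((hasDerivAt_id x).sub_const y).div_const y
    have h3 : HasDerivAt (fun t : ℝ => (β/2)*(t-y)^2/y^2)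
        ((β/2) * ((2:ℕ) * (x - y) ^ (2-1) * 1) / y^2) x := by
      exact ((((hasDerivAt_id x).sub_const y).pow 2).const_mul (β/2)).div_const (y^2)
    have h4 := ((h1.add_const (Real.log y)).add h2).sub h3
    refine (h4.congr_deriv ?_ : _)
    field_simp
    ring
  -- F is nonneg on (0, c]
  have key1 : ∀ x : ℝ, 0 < x → x ≤ c → 0 ≤ F x := by
    intro x hx hxc
    rcases le_total x y with hxy | hyx
    · have hA : AntitoneOn F (Set.Icc x y) := by
        apply antitoneOn_of_deriv_nonpos (convex_Icc x y)
        · intro t ht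
          exact (hFd t (lt_of_lt_of_le hx ht.1)).continuousAt.continuousWithinAt
        · intro t ht
          rw [interior_Icc] at ht
          exact (hFd t (lt_trans hx ht.1)).differentiableAt.differentiableWithinAt
        · intro t ht
          rw [interior_Icc] at ht
          have htpos : 0 < t := lt_trans hx ht.1
          rw [(hFd t htpos).deriv]
          apply div_nonpos_of_nonpos_of_nonneg
          · have h5 : β * t ≤ y := by nlinarith [ht.2]
            nlinarith [ht.2]
          · positivity
      have := hA (Set.left_mem_Icc.2 hxy) (Set.right_mem_Icc.2 hxy) hxy
      linarith [hFy]
    · have hA : MonotoneOn F (Set.Icc y x) := by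
        apply monotoneOn_of_deriv_nonneg (convex_Icc y x)
        · intro t ht
          exact (hFd t (lt_of_lt_of_le hy ht.1)).continuousAt.continuousWithinAt
        · intro t ht
          rw [interior_Icc] at ht
          exact (hFd t (lt_trans hy ht.1)).differentiableAt.differentiableWithinAt
        · intro t ht
          rw [interior_Icc] at ht
          have htpos : 0 < t := lt_trans hy ht.1
          rw [(hFd t htpos).deriv]
          apply div_nonneg
          · have h5 : β * t ≤ y := by
              calc β * t ≤ β * c := by nlinarith [ht.2]
              _ = y := hβc
            nlinarith [ht.1]
          · positivity
      have := hA (Set.left_mem_Icc.2 hyx) (Set.right_mem_Icc.2 hyx) hyx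
      linarith [hFy]
  have hFhhat : ∀ x : ℝ, F x = -Real.log x - hhat x := by
    intro x
    rw [hhatdef, hF]
    ring
  constructor
  · intro x hx
    rw [hdef, hlowdef]
    split_ifs with hxc
    · have := key1 x hx hxc
      rw [hFhhat] at this
      linarith
    · push_neg at hxc
      set G : ℝ → ℝ := fun t => -Real.log t - hhat c + (β/y)*(t - c) with hG
      have hGd : ∀ t : ℝ, 0 < t → HasDerivAt G ((β * t - y)/(t * y)) t := by
        intro t ht
        have h1 : HasDerivAt (fun s : ℝ => -Real.log s) (-t⁻¹) t :=
          (Real.hasDerivAt_log ht.ne').neg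
        have h2 : HasDerivAt (fun s : ℝ => (β/y)*(s - c)) (β/y) t := by
          simpa using ((hasDerivAt_id t).sub_const c).const_mul (β/y)
        have h4 := (h1.sub_const (hhat c)).add h2
        refine (h4.congr_deriv ?_ : _)
        field_simp
        ring
      have hM : MonotoneOn G (Set.Icc c x) := by
        apply monotoneOn_of_deriv_nonneg (convex_Icc c x)
        · intro t ht
          exact (hGd t (lt_of_lt_of_le hcpos ht.1)).continuousAt.continuousWithinAt
        · intro t ht
          rw [interior_Icc] at ht
          exact (hGd t (lt_trans hcpos ht.1)).differentiableAt.differentiableWithinAt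
        · intro t ht
          rw [interior_Icc] at ht
          have htpos : 0 < t := lt_trans hcpos ht.1
          rw [(hGd t htpos).deriv]
          apply div_nonneg
          · nlinarith [ht.1]
          · positivity
      have hcx : c ≤ x := le_of_lt hxc
      have h6 := hM (Set.left_mem_Icc.2 hcx) (Set.right_mem_Icc.2 hcx) hcx
      have h7 : G c = F c := by
        rw [hG, hFhhat]; simp
      have h8 := key1 c hcpos le_rfl
      have h9 : 0 ≤ G x := by
        rw [h7] at h6; linarith
      rw [hG] at h9
      simp only at h9
      linarith
  · rw [hdef, hlowdef, if_pos hcy, hhatdef]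
    simp
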